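/- For every finite subset I ⊆ C and every s ∈ {1,…,n}, the card(I)! rational functions E_{vI;s}(t_I; z_s), vI ∈ Seq(I), are linearly independent over ℂ in the field ℂ(t). -/

import Mathlib

/- STATEMENT 8.
Fix a finite index set `C`, `n ≥ 1` distinct complex numbers `z 1,…,z n`, and a finite subset
`I ⊆ C` (realized as the set of entries of a nodup list `vL`; `Seq(I)` is the set of
permutations of `vL`, of cardinality `card(I)!`).  The theorem: for every `s`, the family of
rational functions `E_{vI;s}(t_I;z_s)`, `vI ∈ Seq(I)`, is linearly independent over ℂ in
`ℂ(t)`. -/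

noncomputable section

abbrev FF (C : Type) := FractionRing (MvPolynomial C ℂ)

def tv {C : Type} (i : C) : FF C := algebraMap (MvPolynomial C ℂ) (FF C) (MvPolynomial.X i)

def cc {C : Type} (w : ℂ) : FF C := algebraMap (MvPolynomial C ℂ) (FF C) (MvPolynomial.C w)

/-- Auxiliary product: `Eaux w [i₁,…,i_N] = 1/(t_{i₁} − w) · ∏_{j=2}^N 1/(t_{i_j} − t_{i_{j−1}})`. -/
def Eaux {C : Type} (w : FF C) : List C → FF C
  | [] => 1
  | i :: tl => (tv i - w)⁻¹ * Eaux (tv i) tl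

/-- `E_{vI;s}(t_I; z_s)`. -/
def Efun {C : Type} (z : ℂ) (l : List C) : FF C := Eaux (cc z) l

open MvPolynomial

variable {σ : Type} [DecidableEq σ]

def pden (w : MvPolynomial σ ℂ) : List σ → MvPolynomial σ ℂ
  | [] => 1
  | i :: tl => (X i - w) * pden (X i) tl

lemma Eaux_alg (w : MvPolynomial σ ℂ) (l : List σ) :
    Eaux (algebraMap (MvPolynomial σ ℂ) (FF σ) w) l
      = (algebraMap (MvPolynomial σ ℂ) (FF σ) (pden w l))⁻¹ := by
  induction l generalizing w with
  | nil => simp [Eaux, pden]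
  | cons i tl ih =>
    rw [Eaux, pden, map_mul, map_sub, mul_inv]
    rw [show tv i = algebraMap (MvPolynomial σ ℂ) (FF σ) (X i) from rfl, ih]

lemma Efun_eq (z : ℂ) (l : List σ) :
    Efun z l = (algebraMap (MvPolynomial σ ℂ) (FF σ) (pden (C z) l))⁻¹ := Eaux_alg _ l

lemma X_ne_C' (i : σ) (w : ℂ) : (X i : MvPolynomial σ ℂ) ≠ C w := by
  intro h
  have := congrArg totalDegree h
  rw [totalDegree_X, totalDegree_C] at this
  exact one_ne_zero this

lemma pden_ne_zero : ∀ (l : List σ), l.Nodup → ∀ w : MvPolynomial σ ℂ,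
    (∀ i ∈ l, X i ≠ w) → pden w l ≠ 0 := by
  intro l
  induction l with
  | nil => intro _ w _; simp [pden]
  | cons i tl ih =>
    intro hnd w hw
    rw [pden]
    refine mul_ne_zero (sub_ne_zero_of_ne (hw i (by simp))) (ih hnd.of_cons (X i) ?_)
    intro j hj
    exact fun h => (List.nodup_cons.mp hnd).1 (X_injective h ▸ hj)

def subst (a : σ) (z : ℂ) : MvPolynomial σ ℂ →ₐ[ℂ] MvPolynomial σ ℂ :=
  aeval (fun i => if i = a then C z else X i)

lemma subst_X_self (a : σ) (z : ℂ) : subst a z (X a) = C z := by simp [subst]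

lemma subst_X_ne' (a : σ) (z : ℂ) {i : σ} (h : i ≠ a) : subst a z (X i) = X i := by
  simp [subst, h]

lemma subst_C (a : σ) (z : ℂ) (w : ℂ) : subst a z (C w) = C w := by
  simp [subst, algebraMap_eq]

lemma subst_X_inj (a : σ) (z : ℂ) {i j : σ} (hij : i ≠ j) :
    subst a z (X i) ≠ subst a z (X j) := by
  rcases eq_or_ne i a with rfl | hi
  · rw [subst_X_self, subst_X_ne' _ z (Ne.symm hij)]
    exact fun h => X_ne_C' j z h.symm
  · rw [subst_X_ne' a z hi]
    rcases eq_or_ne j a with rfl | hj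
    · rw [subst_X_self]; exact X_ne_C' i z
    · rw [subst_X_ne' a z hj]; exact fun h => hij (X_injective h)

lemma subst_pden_notmem (a : σ) (z : ℂ) : ∀ (l : List σ), a ∉ l →
    ∀ w : MvPolynomial σ ℂ, subst a z (pden w l) = pden (subst a z w) l := by
  intro l
  induction l with
  | nil => intro _ w; simp [pden]
  | cons i tl ih =>
    intro ha w
    rw [pden, map_mul, map_sub, ih (fun h => ha (List.mem_cons_of_mem i h)),
      subst_X_ne' a z (fun h => ha (h ▸ List.mem_cons_self (a := i) (l := tl))), pden]

lemma subst_pden_ne_zero (a : σ) (z : ℂ) : ∀ (l : List σ), l.Nodup →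
    ∀ w : MvPolynomial σ ℂ, (∀ i, l.head? = some i → subst a z (X i) ≠ subst a z w) →
    subst a z (pden w l) ≠ 0 := by
  intro l
  induction l with
  | nil => intro _ w _; simp [pden]
  | cons i tl ih =>
    intro hnd w hw
    rw [pden, map_mul, map_sub]
    refine mul_ne_zero (sub_ne_zero_of_ne (hw i rfl)) (ih hnd.of_cons (X i) ?_)
    intro j hj
    have hjtl : j ∈ tl := List.mem_of_mem_head? hj
    exact subst_X_inj a z (fun h => (List.nodup_cons.mp hnd).1 (h ▸ hjtl))

lemma smul_FF {σ : Type} (w : ℂ) (y : FF σ) :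
    w • y = algebraMap (MvPolynomial σ ℂ) (FF σ) (MvPolynomial.C w) * y := by
  induction y using Localization.induction_on with
  | H p =>
    rcases p with ⟨r, d⟩
    rw [← Localization.mk_one_eq_algebraMap, Localization.smul_mk, Localization.mk_mul,
      one_mul, MvPolynomial.smul_eq_C_mul]

set_option maxHeartbeats 1000000 in
set_option synthInstance.maxHeartbeats 200000 in
open MvPolynomial in
lemma main_lemma {σ : Type} [DecidableEq σ] (z : ℂ) :
    ∀ (N : ℕ) (L : List σ), L.length ≤ N → L.Nodup →
    ∀ c : List σ → ℂ,
      (∑ l ∈ L.permutations.toFinset, c l • Efun z l) = 0 →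
      ∀ l ∈ L.permutations.toFinset, c l = 0 := by
  intro N
  induction N with
  | zero =>
    intro L hlen _ c hsum l hl
    have hL : L = [] := List.length_eq_zero_iff.mp (Nat.le_zero.mp hlen)
    subst hL
    rw [List.permutations_nil] at hl hsum
    simp only [List.toFinset_cons, List.toFinset_nil, LawfulSingleton.insert_empty_eq,
      Finset.mem_singleton] at hl
    subst hl
    simp only [List.toFinset_cons, List.toFinset_nil, LawfulSingleton.insert_empty_eq,
      Finset.sum_singleton] at hsum
    rw [show Efun z ([] : List σ) = 1 from rfl, smul_FF, mul_one] at hsum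
    have h2 : MvPolynomial.C (c []) = (0 : MvPolynomial σ ℂ) :=
      IsFractionRing.injective (MvPolynomial σ ℂ) (FF σ) (by rw [map_zero]; exact hsum)
    exact MvPolynomial.C_injective σ ℂ (by rw [map_zero]; exact h2)
  | succ N ih =>
    intro L hlen hnd c hsum l0 hl0
    classical
    have hperm0 : l0.Perm L := List.mem_permutations.mp (List.mem_toFinset.mp hl0)
    match l0, hl0, hperm0 with
    | [], hl0, hperm0 =>
      have hL : L = [] := List.perm_nil.mp hperm0.symm
      exact ih L (by simp [hL]) hnd c hsum [] hl0
    | a :: t0, hl0, hperm0 =>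
    have haL : a ∈ L := hperm0.subset (List.mem_cons_self (a := a) (l := t0))
    have hAlgInj : Function.Injective (algebraMap (MvPolynomial σ ℂ) (FF σ)) :=
      IsFractionRing.injective _ _
    have hAlgne : ∀ p : MvPolynomial σ ℂ, p ≠ 0 → algebraMap (MvPolynomial σ ℂ) (FF σ) p ≠ 0 :=
      fun p hp h => hp (hAlgInj (by rw [h, map_zero]))
    set φ : MvPolynomial σ ℂ →+* FF σ := (algebraMap (MvPolynomial σ ℂ) (FF σ)).comp (subst a z).toRingHom with hφdef
    have hφ : ∀ p, φ p = algebraMap (MvPolynomial σ ℂ) (FF σ) (subst a z p) := fun p => rfl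
    set S : Submonoid (MvPolynomial σ ℂ) :=
      Submonoid.comap φ (nonZeroDivisors (FF σ)) with hSdef
    have hmemS : ∀ p : MvPolynomial σ ℂ, subst a z p ≠ 0 → p ∈ S := by
      intro p hp
      simp only [hSdef, Submonoid.mem_comap]
      exact mem_nonZeroDivisors_of_ne_zero (by rw [hφ]; exact hAlgne _ hp)
    have hSne : ∀ y : S, φ (y : MvPolynomial σ ℂ) ≠ 0 := by
      intro y
      have h2 : φ (y : MvPolynomial σ ℂ) ∈ nonZeroDivisors (FF σ) := y.2
      exact nonZeroDivisors.ne_zero h2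
    have hSnz : ∀ y : S, (y : MvPolynomial σ ℂ) ≠ 0 := by
      intro y h
      exact hSne y (by rw [h, map_zero])
    have hAlgSne : ∀ y : S, algebraMap (MvPolynomial σ ℂ) (FF σ) (y : MvPolynomial σ ℂ) ≠ 0 := fun y => hAlgne _ (hSnz y)
    set ψ : Localization S →+* FF σ :=
      IsLocalization.lift (fun y : S => isUnit_iff_ne_zero.mpr (hSne y)) with hψdef
    set j : Localization S →+* FF σ :=
      IsLocalization.lift (fun y : S => isUnit_iff_ne_zero.mpr (hAlgSne y)) with hjdef
    have jmk : ∀ (p q : MvPolynomial σ ℂ) (hq : q ∈ S),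
        j (IsLocalization.mk' (Localization S) p (⟨q, hq⟩ : S)) = algebraMap (MvPolynomial σ ℂ) (FF σ) p / algebraMap (MvPolynomial σ ℂ) (FF σ) q := by
      intro p q hq
      rw [hjdef, IsLocalization.lift_mk'_spec]
      rw [mul_comm, div_mul_cancel₀ _ (hAlgSne ⟨q, hq⟩)]
    have ψmk : ∀ (p q : MvPolynomial σ ℂ) (hq : q ∈ S),
        ψ (IsLocalization.mk' (Localization S) p (⟨q, hq⟩ : S)) = φ p / φ q := by
      intro p q hq
      rw [hψdef, IsLocalization.lift_mk'_spec]
      rw [mul_comm, div_mul_cancel₀ _ (hSne ⟨q, hq⟩)]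
    have hj_inj : Function.Injective j := by
      rw [injective_iff_map_eq_zero]
      intro x hx
      obtain ⟨⟨p, s⟩, rfl⟩ := IsLocalization.mk'_surjective S x
      dsimp only at hx ⊢
      rw [show s = (⟨(s : MvPolynomial σ ℂ), s.2⟩ : S) from rfl, jmk, div_eq_zero_iff] at hx
      rcases hx with hx | hx
      · have : p = 0 := hAlgInj (by rw [hx, map_zero])
        rw [this, IsLocalization.mk'_zero]
      · exact absurd hx (hAlgSne s)
    have hsubm : subst a z (MvPolynomial.X a - MvPolynomial.C z) = 0 := by
      rw [map_sub, subst_X_self, subst_C, sub_self]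
    have hmne : (MvPolynomial.X a - MvPolynomial.C z : MvPolynomial σ ℂ) ≠ 0 :=
      sub_ne_zero_of_ne (X_ne_C' a z)
    set P := L.permutations.toFinset with hPdef
    set x : List σ → Localization S := fun l =>
      if h : subst a z (pden (MvPolynomial.C z) l) ≠ 0 then
        IsLocalization.mk' (Localization S)
          (MvPolynomial.C (c l) * (MvPolynomial.X a - MvPolynomial.C z))
          (⟨pden (MvPolynomial.C z) l, hmemS _ h⟩ : S)
      else if h2 : subst a z (pden (MvPolynomial.X a) l.tail) ≠ 0 then
        IsLocalization.mk' (Localization S) (MvPolynomial.C (c l))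
          (⟨pden (MvPolynomial.X a) l.tail, hmemS _ h2⟩ : S)
      else 0 with hxdef
    have hcase : ∀ l ∈ P,
        (j (x l) = algebraMap (MvPolynomial σ ℂ) (FF σ) (MvPolynomial.X a - MvPolynomial.C z) * (c l • Efun z l)) ∧
        (ψ (x l) = if l.head? = some a then c l • Efun z l.tail else 0) := by
      intro l hl
      have hperml : l.Perm L := List.mem_permutations.mp (List.mem_toFinset.mp hl)
      have hndl : l.Nodup := (hperml.nodup_iff).mpr hnd
      match l with
      | [] =>
        exact absurd haL (by rw [List.perm_nil.mp hperml.symm]; exact List.not_mem_nil)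
      | b :: tl =>
      have hndtl : tl.Nodup := hndl.of_cons
      have hbtl : b ∉ tl := (List.nodup_cons.mp hndl).1
      have hDne : pden (MvPolynomial.C z) (b :: tl) ≠ 0 :=
        pden_ne_zero _ hndl _ (fun i _ => X_ne_C' i z)
      have hDtne : pden (MvPolynomial.X b) tl ≠ 0 :=
        pden_ne_zero _ hndtl _ (fun i hi h => hbtl (MvPolynomial.X_injective h ▸ hi))
      have hDtlne : pden (MvPolynomial.C z) tl ≠ 0 :=
        pden_ne_zero _ hndtl _ (fun i _ => X_ne_C' i z)
      by_cases hba : b = a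
      · subst hba
        have hz1 : ¬ subst b z (pden (MvPolynomial.C z) (b :: tl)) ≠ 0 := by
          rw [not_not, pden, map_mul, map_sub, subst_X_self, subst_C, sub_self, zero_mul]
        have h2 : subst b z (pden (MvPolynomial.X b) tl) ≠ 0 := by
          rw [subst_pden_notmem b z tl hbtl, subst_X_self]
          exact hDtlne
        have hxl : x (b :: tl) = IsLocalization.mk' (Localization S)
            (MvPolynomial.C (c (b :: tl)))
            (⟨pden (MvPolynomial.X b) tl, hmemS _ h2⟩ : S) := by
          simp only [hxdef, List.tail_cons]
          rw [dif_neg hz1]; exact dif_pos h2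
        constructor
        · rw [hxl, jmk, Efun_eq, smul_FF,
            show pden (MvPolynomial.C z) (b :: tl)
              = (MvPolynomial.X b - MvPolynomial.C z) * pden (MvPolynomial.X b) tl from rfl,
            map_mul]
          have hM : (algebraMap (MvPolynomial σ ℂ) (FF σ) (MvPolynomial.X b)
              - algebraMap (MvPolynomial σ ℂ) (FF σ) (MvPolynomial.C z)) ≠ 0 := by
            rw [← map_sub]; exact hAlgne _ hmne
          have hDt : algebraMap (MvPolynomial σ ℂ) (FF σ) (pden (MvPolynomial.X b) tl) ≠ 0 :=
            hAlgne _ hDtne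
          rw [map_sub]
          field_simp
        · rw [hxl, ψmk, List.head?_cons, List.tail_cons, if_pos rfl]
          rw [hφ, hφ, subst_C, subst_pden_notmem b z tl hbtl, subst_X_self,
            Efun_eq, smul_FF, div_eq_mul_inv]
      · have h1 : subst a z (pden (MvPolynomial.C z) (b :: tl)) ≠ 0 := by
          apply subst_pden_ne_zero a z _ hndl
          intro i hi
          rw [List.head?_cons, Option.some_inj] at hi
          subst hi
          rw [subst_X_ne' a z hba, subst_C]
          exact X_ne_C' _ z
        have hxl : x (b :: tl) = IsLocalization.mk' (Localization S)
            (MvPolynomial.C (c (b :: tl)) * (MvPolynomial.X a - MvPolynomial.C z))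
            (⟨pden (MvPolynomial.C z) (b :: tl), hmemS _ h1⟩ : S) := by
          simp only [hxdef]
          rw [dif_pos h1]
        constructor
        · rw [hxl, jmk, Efun_eq, smul_FF, map_mul]
          have hD : algebraMap (MvPolynomial σ ℂ) (FF σ) (pden (MvPolynomial.C z) (b :: tl)) ≠ 0 := hAlgne _ hDne
          field_simp
        · rw [hxl, ψmk, List.head?_cons,
            if_neg (by simp only [Option.some_inj]; exact hba)]
          rw [map_mul]
          have hm0 : φ (MvPolynomial.X a - MvPolynomial.C z) = 0 := by
            rw [hφ, hsubm, map_zero]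
          rw [hm0, mul_zero, zero_div]
    have hx0 : ∑ l ∈ P, x l = 0 := by
      apply hj_inj
      rw [map_sum, map_zero]
      calc ∑ l ∈ P, j (x l)
          = ∑ l ∈ P, algebraMap (MvPolynomial σ ℂ) (FF σ) (MvPolynomial.X a - MvPolynomial.C z) * (c l • Efun z l) :=
            Finset.sum_congr rfl (fun l hl => (hcase l hl).1)
        _ = algebraMap (MvPolynomial σ ℂ) (FF σ) (MvPolynomial.X a - MvPolynomial.C z) * ∑ l ∈ P, c l • Efun z l := by
            rw [Finset.mul_sum]
        _ = 0 := by rw [hsum, mul_zero]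
    have hψ1 : ∑ l ∈ P, (if l.head? = some a then c l • Efun z l.tail else 0) = 0 := by
      have hψs : ∑ l ∈ P, ψ (x l) = 0 := by
        rw [← map_sum, hx0, map_zero]
      exact (Finset.sum_congr rfl (fun l hl => ((hcase l hl).2).symm)).trans hψs
    rw [← Finset.sum_filter] at hψ1
    have hkey : ∑ tl ∈ (L.erase a).permutations.toFinset, c (a :: tl) • Efun z tl = 0 := by
      rw [← hψ1]
      refine Finset.sum_bij' (i := fun tl _ => a :: tl) (j := fun l _ => l.tail)
        ?_ ?_ ?_ ?_ ?_
      · intro tl htl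
        have hptl : tl.Perm (L.erase a) := List.mem_permutations.mp (List.mem_toFinset.mp htl)
        rw [Finset.mem_filter]
        exact ⟨List.mem_toFinset.mpr (List.mem_permutations.mpr
          (List.cons_perm_iff_perm_erase.mpr ⟨haL, hptl⟩)), rfl⟩
      · intro l hlf
        rw [Finset.mem_filter] at hlf
        obtain ⟨hlP, hlh⟩ := hlf
        have hperml : l.Perm L := List.mem_permutations.mp (List.mem_toFinset.mp hlP)
        have hleq : a :: l.tail = l := List.cons_head?_tail hlh
        rw [List.mem_toFinset, List.mem_permutations]
        rw [← hleq] at hperml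
        exact (List.cons_perm_iff_perm_erase.mp hperml).2
      · intro tl htl; rfl
      · intro l hlf
        rw [Finset.mem_filter] at hlf
        exact List.cons_head?_tail hlf.2
      · intro tl htl; rfl
    have hlenN : (L.erase a).length ≤ N := by
      rw [List.length_erase_of_mem haL]
      omega
    have ht0 : t0 ∈ (L.erase a).permutations.toFinset := by
      rw [List.mem_toFinset, List.mem_permutations]
      exact (List.cons_perm_iff_perm_erase.mp hperm0).2
    exact ih (L.erase a) hlenN (hnd.erase a) (fun tl => c (a :: tl)) hkey t0 ht0

theorem statement8 {C : Type} [Fintype C] [DecidableEq C]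
    (n : ℕ) (hn : 1 ≤ n) (z : Fin n → ℂ) (hz : Function.Injective z)
    (vL : List C) (hnd : vL.Nodup) (s : Fin n) :
    LinearIndependent ℂ
      (fun vI : {l : List C // l ∈ vL.permutations.toFinset} => Efun (z s) vI.val) := by
  classical
  rw [Fintype.linearIndependent_iff]
  intro g hg i
  let c : List C → ℂ := fun l => if h : l ∈ vL.permutations.toFinset then g ⟨l, h⟩ else 0
  have hcg : ∀ j : {l : List C // l ∈ vL.permutations.toFinset}, c j.val = g j :=
    fun j => dif_pos j.2
  have h1 : ∑ l ∈ vL.permutations.toFinset, c l • Efun (z s) l = 0 := by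
    rw [← Finset.sum_attach vL.permutations.toFinset (fun l => c l • Efun (z s) l)]
    calc ∑ j ∈ vL.permutations.toFinset.attach, c j.val • Efun (z s) j.val
        = ∑ j ∈ vL.permutations.toFinset.attach, g j • Efun (z s) j.val :=
          Finset.sum_congr rfl (fun j _ => by rw [hcg j])
      _ = 0 := by rw [← Finset.univ_eq_attach]; exact hg
  have h2 := main_lemma (z s) vL.length vL le_rfl hnd c h1 i.val i.2
  rw [← hcg i]
  exact h2

end
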